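/- Li₃(1/2) = 7ζ(3)/8 − π²·log 2/12 + (log 2)³/6, where Li₃(x) = ∑_{k≥1} x^k/k³ and ζ(3) = ∑_{k≥1} 1/k³. -/

import Mathlib

noncomputable def Li (s : ℕ) (z : ℂ) : ℂ := ∑' k : ℕ, z ^ (k + 1) / ((k : ℂ) + 1) ^ s

noncomputable def LiR (s : ℕ) (x : ℝ) : ℝ := ∑' k : ℕ, x ^ (k + 1) / ((k : ℝ) + 1) ^ s

noncomputable def zeta3 : ℝ := ∑' k : ℕ, 1 / ((k : ℝ) + 1) ^ 3

open Real Filter Set Topology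

lemma summable_inv_sq : Summable (fun k : ℕ => 1 / ((k : ℝ) + 1) ^ 2) := by
  have := (summable_nat_add_iff 1).2 (Real.summable_one_div_nat_pow.2 (by norm_num : 1 < 2))
  simpa using this

lemma term_bound {x : ℝ} (hx : |x| ≤ 1) {s : ℕ} (hs : 2 ≤ s) (k : ℕ) :
    ‖x ^ (k + 1) / ((k : ℝ) + 1) ^ s‖ ≤ 1 / ((k : ℝ) + 1) ^ 2 := by
  have hk1 : (1:ℝ) ≤ (k : ℝ) + 1 := by have := Nat.cast_nonneg (α := ℝ) k; linarith
  rw [norm_div, norm_pow, norm_pow, Real.norm_eq_abs, Real.norm_eq_abs,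
    abs_of_nonneg (by positivity : (0:ℝ) ≤ (k:ℝ)+1)]
  apply div_le_div₀ (by norm_num)
  · exact pow_le_one₀ (abs_nonneg x) hx
  · positivity
  · exact pow_le_pow_right₀ hk1 hs

lemma summable_LiR {x : ℝ} (hx : |x| ≤ 1) {s : ℕ} (hs : 2 ≤ s) :
    Summable (fun k : ℕ => x ^ (k + 1) / ((k : ℝ) + 1) ^ s) :=
  Summable.of_norm (summable_inv_sq.of_nonneg_of_le (fun _ => norm_nonneg _) (term_bound hx hs))

lemma contOn_LiR {s : ℕ} (hs : 2 ≤ s) : ContinuousOn (LiR s) (Icc (-1:ℝ) 1) := by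
  have h := tendstoUniformlyOn_tsum (f := fun (k:ℕ) (x:ℝ) => x ^ (k + 1) / ((k : ℝ) + 1) ^ s)
    summable_inv_sq (s := Icc (-1:ℝ) 1)
    (fun k x hx => term_bound (abs_le.2 ⟨hx.1, hx.2⟩) hs k)
  exact h.continuousOn (Eventually.of_forall fun t =>
    (continuous_finset_sum t fun i _ => by fun_prop).continuousOn).frequently

lemma summable_pow_div {x : ℝ} (hx : |x| < 1) (s : ℕ) :
    Summable (fun k : ℕ => x ^ k / ((k : ℝ) + 1) ^ s) := by
  apply Summable.of_norm
  apply Summable.of_nonneg_of_le (fun _ => norm_nonneg _) (fun k => ?_)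
    (summable_geometric_of_lt_one (abs_nonneg x) hx)
  rw [norm_div, norm_pow, Real.norm_eq_abs, Real.norm_eq_abs,
    abs_of_nonneg (by positivity : (0:ℝ) ≤ ((k:ℝ)+1)^s)]
  have hk1 : (1:ℝ) ≤ ((k : ℝ) + 1) ^ s := by
    apply one_le_pow₀; have := Nat.cast_nonneg (α := ℝ) k; linarith
  calc |x|^k / ((k:ℝ)+1)^s ≤ |x|^k / 1 := by
        apply div_le_div_of_nonneg_left (by positivity) one_pos hk1
    _ = |x|^k := by ring

lemma hasDerivAt_LiR (s : ℕ) {x : ℝ} (hx : |x| < 1) :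
    HasDerivAt (LiR (s+1)) (∑' k : ℕ, x ^ k / ((k : ℝ) + 1) ^ s) x := by
  set r : ℝ := (1 + |x|) / 2 with hr
  have hr0 : 0 ≤ r := by positivity
  have hr1 : r < 1 := by rw [hr]; linarith
  have hxr : |x| < r := by rw [hr]; linarith
  have hg : ∀ (n : ℕ) (y : ℝ), y ∈ Metric.ball (0:ℝ) r →
      HasDerivAt (fun z : ℝ => z ^ (n + 1) / ((n : ℝ) + 1) ^ (s+1))
        (y ^ n / ((n : ℝ) + 1) ^ s) y := by
    intro n y _
    have h := (hasDerivAt_pow (n+1) y).div_const (((n:ℝ)+1)^(s+1))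
    refine h.congr_deriv ?_
    have hn : ((n:ℝ)+1) ≠ 0 := by positivity
    push_cast
    rw [pow_succ]
    field_simp
  have hg' : ∀ (n : ℕ) (y : ℝ), y ∈ Metric.ball (0:ℝ) r →
      ‖y ^ n / ((n : ℝ) + 1) ^ s‖ ≤ r ^ n := by
    intro n y hy
    rw [Metric.mem_ball, Real.dist_eq, sub_zero] at hy
    have h1 : (1:ℝ) ≤ ((n:ℝ)+1)^s := by
      apply one_le_pow₀; have := Nat.cast_nonneg (α := ℝ) n; linarith
    rw [norm_div, norm_pow, Real.norm_eq_abs, Real.norm_eq_abs,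
      abs_of_nonneg (by positivity : (0:ℝ) ≤ ((n:ℝ)+1)^(s:ℕ))]
    calc |y|^n / ((n:ℝ)+1)^s ≤ |y|^n / 1 :=
          div_le_div_of_nonneg_left (by positivity) one_pos h1
      _ = |y|^n := by ring
      _ ≤ r^n := pow_le_pow_left₀ (abs_nonneg y) hy.le n
  have hsum0 : Summable (fun n : ℕ => (0:ℝ) ^ (n + 1) / ((n : ℝ) + 1) ^ (s+1)) := by
    apply Summable.congr (f := fun _ : ℕ => (0:ℝ)) summable_zero
    intro n; simp
  exact hasDerivAt_tsum_of_isPreconnected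
    (summable_geometric_of_lt_one hr0 hr1) Metric.isOpen_ball
    ((convex_ball (0:ℝ) r).isPreconnected) hg hg'
    (Metric.mem_ball_self (lt_of_le_of_lt (abs_nonneg x) hxr)) hsum0
    (by simpa [Metric.mem_ball, Real.dist_eq] using hxr)

lemma tsum_shift {s : ℕ} {x : ℝ} (hx : |x| < 1) (hx0 : x ≠ 0) :
    ∑' k : ℕ, x ^ k / ((k : ℝ) + 1) ^ s = LiR s x / x := by
  rw [LiR, eq_div_iff hx0, ← tsum_mul_right]
  apply tsum_congr; intro k; rw [pow_succ]; ring

lemma LiR_one_eq {x : ℝ} (hx : |x| < 1) : LiR 1 x = -Real.log (1 - x) := by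
  rw [LiR, ← (hasSum_pow_div_log_of_abs_lt_one hx).tsum_eq]
  apply tsum_congr; intro k; rw [pow_one]

lemma hasDerivAt_LiR2 {x : ℝ} (hx : |x| < 1) (hx0 : x ≠ 0) :
    HasDerivAt (LiR 2) (-Real.log (1 - x) / x) x := by
  have h := hasDerivAt_LiR 1 hx
  rwa [tsum_shift hx hx0, LiR_one_eq hx] at h

lemma hasDerivAt_LiR3 {x : ℝ} (hx : |x| < 1) (hx0 : x ≠ 0) :
    HasDerivAt (LiR 3) (LiR 2 x / x) x := by
  have h := hasDerivAt_LiR 2 hx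
  rwa [tsum_shift hx hx0] at h

lemma const_of_deriv_zero {f : ℝ → ℝ} {a b : ℝ} (h : ∀ x ∈ Ioo a b, HasDerivAt f 0 x) :
    ∀ x ∈ Ioo a b, ∀ y ∈ Ioo a b, f x = f y := by
  have key : ∀ x ∈ Ioo a b, ∀ y ∈ Ioo a b, x ≤ y → f y = f x := by
    intro x hx y hy hxy
    have hsub : Icc x y ⊆ Ioo a b := Icc_subset_Ioo hx.1 hy.2
    exact constant_of_has_deriv_right_zero
      (fun t ht => (h t (hsub ht)).continuousAt.continuousWithinAt)
      (fun t ht => (h t (hsub (Ico_subset_Icc_self ht))).hasDerivWithinAt)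
      y (right_mem_Icc.2 hxy)
  intro x hx y hy
  rcases le_total x y with hxy | hxy
  · exact (key x hx y hy hxy).symm
  · exact key y hy x hx hxy

lemma eval_at_left {f : ℝ → ℝ} {a b c L : ℝ} (hab : a < b) (hc : ∀ x ∈ Ioo a b, f x = c)
    (hL : Tendsto f (𝓝[Ioo a b] a) (𝓝 L)) : c = L := by
  have hne : (𝓝[Ioo a b] a).NeBot := by
    rw [← mem_closure_iff_nhdsWithin_neBot, closure_Ioo hab.ne]
    exact ⟨le_rfl, hab.le⟩
  have h1 : ∀ᶠ x in 𝓝[Ioo a b] a, f x = c :=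
    eventually_mem_nhdsWithin.mono hc
  have h2 : Tendsto (fun _ : ℝ => c) (𝓝[Ioo a b] a) (𝓝 L) := Tendsto.congr' h1 hL
  exact tendsto_nhds_unique tendsto_const_nhds h2

lemma eval_at_right {f : ℝ → ℝ} {a b c L : ℝ} (hab : a < b) (hc : ∀ x ∈ Ioo a b, f x = c)
    (hL : Tendsto f (𝓝[Ioo a b] b) (𝓝 L)) : c = L := by
  have hne : (𝓝[Ioo a b] b).NeBot := by
    rw [← mem_closure_iff_nhdsWithin_neBot, closure_Ioo hab.ne]
    exact ⟨hab.le, le_rfl⟩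
  have h1 : ∀ᶠ x in 𝓝[Ioo a b] b, f x = c :=
    eventually_mem_nhdsWithin.mono hc
  have h2 : Tendsto (fun _ : ℝ => c) (𝓝[Ioo a b] b) (𝓝 L) := Tendsto.congr' h1 hL
  exact tendsto_nhds_unique tendsto_const_nhds h2

lemma LiR_zero (s : ℕ) : LiR s 0 = 0 := by
  rw [LiR]
  convert tsum_zero with k
  simp

lemma LiR_two_one : LiR 2 1 = π^2/6 := by
  have h := hasSum_zeta_two.tsum_eq
  rw [LiR]
  rw [Summable.tsum_eq_zero_add (by simpa using Real.summable_one_div_nat_pow.2 (by norm_num : 1 < 2))] at h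
  simp only [Nat.cast_zero, one_pow] at h ⊢
  rw [← h]
  norm_num

lemma LiR_three_one : LiR 3 1 = zeta3 := by
  rw [LiR, zeta3]; apply tsum_congr; intro k; rw [one_pow]

lemma summable_zeta3 : Summable (fun k : ℕ => 1 / ((k : ℝ) + 1) ^ 3) := by
  have := (summable_nat_add_iff 1).2 (Real.summable_one_div_nat_pow.2 (by norm_num : 2 ≤ 3))
  simpa using this

lemma LiR_three_neg_one : LiR 3 (-1) = -(3/4) * zeta3 := by
  have hζ : HasSum (fun k : ℕ => 1 / ((k : ℝ) + 1) ^ 3) zeta3 := summable_zeta3.hasSum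
  have hL : HasSum (fun k : ℕ => (-1:ℝ) ^ (k+1) / ((k : ℝ) + 1) ^ 3) (LiR 3 (-1)) :=
    (summable_LiR (by norm_num) (by norm_num : 2 ≤ 3)).hasSum
  set F : ℕ → ℝ := fun k => 1 / ((k : ℝ) + 1) ^ 3 + (-1:ℝ) ^ (k+1) / ((k : ℝ) + 1) ^ 3 with hF
  have hAdd : HasSum F (zeta3 + LiR 3 (-1)) := hζ.add hL
  have hinj : Function.Injective (fun m : ℕ => 2*m+1) := by intro a b hab; simpa using hab
  have hsupp : ∀ k ∉ Set.range (fun m : ℕ => 2*m+1), F k = 0 := by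
    intro k hk
    have hkev : Even k := by
      rcases Nat.even_or_odd k with h | h
      · exact h
      · rcases h with ⟨m, hm⟩
        exact absurd ⟨m, hm.symm⟩ hk
    have : (-1:ℝ) ^ (k+1) = -1 := by
      rcases hkev with ⟨m, hm⟩
      exact Odd.neg_one_pow ⟨m, by omega⟩
    rw [hF]
    simp only [this]
    ring
  have hcomp : HasSum (F ∘ fun m : ℕ => 2*m+1) (zeta3 + LiR 3 (-1)) :=
    (hinj.hasSum_iff hsupp).2 hAdd
  have hq : HasSum (fun m : ℕ => (1/4) * (1 / ((m : ℝ) + 1) ^ 3)) ((1/4) * zeta3) :=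
    hζ.mul_left (1/4)
  have heq : (F ∘ fun m : ℕ => 2*m+1) = fun m : ℕ => (1/4) * (1 / ((m : ℝ) + 1) ^ 3) := by
    funext m
    have hm1 : ((m:ℝ) + 1) ≠ 0 := by positivity
    have hpow : (-1:ℝ) ^ (2*m+1+1) = 1 := Even.neg_one_pow ⟨m+1, by ring⟩
    simp only [hF, Function.comp_apply, hpow]
    push_cast
    field_simp
    ring
  rw [heq] at hcomp
  have := hq.unique hcomp
  linarith

lemma hasDerivAt_LiR2_one_sub {x : ℝ} (hx : |1 - x| < 1) (hx1 : x ≠ 1) :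
    HasDerivAt (fun y : ℝ => LiR 2 (1 - y)) (Real.log x / (1 - x)) x := by
  have hinner : HasDerivAt (fun y : ℝ => 1 - y) (-1) x := by
    simpa using (hasDerivAt_id x).const_sub 1
  have h := (hasDerivAt_LiR2 hx (sub_ne_zero.2 (fun h => hx1 h.symm))).comp x hinner
  refine h.congr_deriv ?_
  rw [show (1:ℝ) - (1 - x) = x by ring]
  field_simp

lemma hasDerivAt_log_mul {x : ℝ} (hx0 : x ≠ 0) (hx1 : x ≠ 1) :
    HasDerivAt (fun y : ℝ => Real.log y * Real.log (1 - y))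
      (Real.log (1 - x) / x - Real.log x / (1 - x)) x := by
  have h1x : (1:ℝ) - x ≠ 0 := sub_ne_zero.2 (fun h => hx1 h.symm)
  have hinner : HasDerivAt (fun y : ℝ => 1 - y) (-1) x := by
    simpa using (hasDerivAt_id x).const_sub 1
  have hlog2 : HasDerivAt (fun y : ℝ => Real.log (1 - y)) ((1 - x)⁻¹ * (-1)) x :=
    (Real.hasDerivAt_log h1x).comp x hinner
  have h := (Real.hasDerivAt_log hx0).mul hlog2
  refine h.congr_deriv ?_
  field_simp
  ring

lemma li2_reflection : ∀ x ∈ Ioo (0:ℝ) 1,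
    LiR 2 x + LiR 2 (1 - x) + Real.log x * Real.log (1 - x) = π^2/6 := by
  set f : ℝ → ℝ := fun x => LiR 2 x + LiR 2 (1 - x) + Real.log x * Real.log (1 - x) with hfdef
  have hderiv : ∀ x ∈ Ioo (0:ℝ) 1, HasDerivAt f 0 x := by
    intro x hx
    obtain ⟨hx0, hx1⟩ := hx
    have habs : |x| < 1 := abs_lt.2 ⟨by linarith, hx1⟩
    have habs' : |1 - x| < 1 := abs_lt.2 ⟨by linarith, by linarith⟩
    have h1 := hasDerivAt_LiR2 habs (ne_of_gt hx0)
    have h2 := hasDerivAt_LiR2_one_sub habs' (ne_of_lt hx1)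
    have h3 := hasDerivAt_log_mul (ne_of_gt hx0) (ne_of_lt hx1)
    have h := (h1.add h2).add h3
    refine h.congr_deriv ?_
    ring
  have hconst := const_of_deriv_zero hderiv
  intro x hx
  have hx12 : (1/2 : ℝ) ∈ Ioo (0:ℝ) 1 := by norm_num
  have hcc : ∀ y ∈ Ioo (0:ℝ) 1, f y = f (1/2) := fun y hy => hconst y hy _ hx12
  -- Now compute f (1/2) via the limit at 1.
  have hlim : Tendsto f (𝓝[Ioo (0:ℝ) 1] 1) (𝓝 (π^2/6)) := by
    have hsub : Ioo (0:ℝ) 1 ⊆ Icc (-1:ℝ) 1 := fun y hy => ⟨by linarith [hy.1], hy.2.le⟩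
    -- LiR 2 x → LiR 2 1
    have t1 : Tendsto (LiR 2) (𝓝[Ioo (0:ℝ) 1] 1) (𝓝 (π^2/6)) := by
      have h := (((contOn_LiR (le_refl 2)) 1 (by norm_num)).mono hsub).tendsto
      rwa [LiR_two_one] at h
    -- LiR 2 (1 - x) → LiR 2 0 = 0
    have t2 : Tendsto (fun x : ℝ => LiR 2 (1 - x)) (𝓝[Ioo (0:ℝ) 1] 1) (𝓝 0) := by
      have hin : Tendsto (fun x : ℝ => 1 - x) (𝓝[Ioo (0:ℝ) 1] 1) (𝓝[Icc (-1:ℝ) 1] 0) := by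
        apply tendsto_nhdsWithin_of_tendsto_nhds_of_eventually_within
        · have hcont : Tendsto (fun x : ℝ => 1 - x) (𝓝 1) (𝓝 0) := by
            simpa using ((continuous_sub_left (1:ℝ)).tendsto (1:ℝ) :
              Tendsto (fun y : ℝ => 1 - y) _ _)
          exact hcont.mono_left nhdsWithin_le_nhds
        · filter_upwards [self_mem_nhdsWithin] with y hy
          exact ⟨by linarith [hy.2], by linarith [hy.1]⟩
      have hc := (contOn_LiR (le_refl 2)) 0 (by norm_num)
      have := hc.tendsto.comp hin
      rwa [LiR_zero] at this
    -- log x * log (1-x) → 0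
    have t3 : Tendsto (fun x : ℝ => Real.log x * Real.log (1 - x)) (𝓝[Ioo (0:ℝ) 1] 1) (𝓝 0) := by
      have hA : Tendsto (fun t : ℝ => Real.log t * t) (𝓝[>] (0:ℝ)) (𝓝 0) := by
        have := tendsto_log_mul_rpow_nhdsGT_zero (one_pos)
        simpa using this
      have hin : Tendsto (fun x : ℝ => 1 - x) (𝓝[Ioo (0:ℝ) 1] 1) (𝓝[>] (0:ℝ)) := by
        apply tendsto_nhdsWithin_of_tendsto_nhds_of_eventually_within
        · have hcont : Tendsto (fun x : ℝ => 1 - x) (𝓝 1) (𝓝 0) := by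
            simpa using ((continuous_sub_left (1:ℝ)).tendsto (1:ℝ) :
              Tendsto (fun y : ℝ => 1 - y) _ _)
          exact hcont.mono_left nhdsWithin_le_nhds
        · filter_upwards [self_mem_nhdsWithin] with y hy
          simpa using hy.2
      have h1 : Tendsto (fun x : ℝ => Real.log (1 - x) * (1 - x)) (𝓝[Ioo (0:ℝ) 1] 1) (𝓝 0) :=
        hA.comp hin
      have hslope : Tendsto (fun x : ℝ => Real.log x / (x - 1)) (𝓝[Ioo (0:ℝ) 1] 1) (𝓝 1) := by
        have hd : HasDerivAt Real.log 1 1 := by simpa using Real.hasDerivAt_log one_ne_zero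
        have := hasDerivAt_iff_tendsto_slope.1 hd
        have hmono : 𝓝[Ioo (0:ℝ) 1] (1:ℝ) ≤ 𝓝[≠] (1:ℝ) :=
          nhdsWithin_mono 1 (fun y hy => ne_of_lt hy.2)
        have h2 := this.mono_left hmono
        apply h2.congr'
        filter_upwards [self_mem_nhdsWithin] with y _
        rw [slope_def_field]
        rw [Real.log_one]
        ring_nf
      have hmul := (hslope.mul h1).neg
      have : Tendsto (fun x : ℝ => -(Real.log x / (x - 1) * (Real.log (1 - x) * (1 - x))))
          (𝓝[Ioo (0:ℝ) 1] 1) (𝓝 0) := by simpa using hmul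
      apply this.congr'
      filter_upwards [self_mem_nhdsWithin] with y hy
      have hy1 : y - 1 ≠ 0 := sub_ne_zero.2 (ne_of_lt hy.2)
      field_simp
      ring
    have := (t1.add t2).add t3
    simpa using this
  have := eval_at_right (by norm_num : (0:ℝ) < 1) hcc hlim
  show f x = π^2/6
  rw [hcc x hx, this]

lemma u_mem {x : ℝ} (hx : x ∈ Ioo (0:ℝ) (1/2)) : x/(x-1) ∈ Ioo (-1:ℝ) 0 := by
  obtain ⟨h0, h2⟩ := hx
  have h1 : x - 1 < 0 := by linarith
  constructor
  · rw [lt_div_iff_of_neg h1]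
    linarith
  · exact div_neg_of_pos_of_neg h0 h1

lemma hasDerivAt_u {x : ℝ} (hx1 : x ≠ 1) :
    HasDerivAt (fun y : ℝ => y/(y-1)) (-1/(x-1)^2) x := by
  have h := (hasDerivAt_id x).div ((hasDerivAt_id x).sub_const 1) (sub_ne_zero.2 hx1)
  refine h.congr_deriv ?_
  simp only [id_eq]
  ring

lemma one_sub_u {x : ℝ} (hx1 : x ≠ 1) : (1:ℝ) - x/(x-1) = (1-x)⁻¹ := by
  have h : x - 1 ≠ 0 := sub_ne_zero.2 hx1
  have h' : (1:ℝ) - x ≠ 0 := fun hh => h (by linarith [sub_eq_zero.1 hh])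
  field_simp
  ring

lemma hasDerivAt_log_one_sub {x : ℝ} (hx1 : x ≠ 1) :
    HasDerivAt (fun y : ℝ => Real.log (1 - y)) ((1-x)⁻¹ * (-1)) x := by
  have h1x : (1:ℝ) - x ≠ 0 := sub_ne_zero.2 (fun h => hx1 h.symm)
  have hinner : HasDerivAt (fun y : ℝ => 1 - y) (-1) x := by
    simpa using (hasDerivAt_id x).const_sub 1
  exact (Real.hasDerivAt_log h1x).comp x hinner

lemma landen2 : ∀ x ∈ Ioo (0:ℝ) (1/2),
    LiR 2 (x/(x-1)) + LiR 2 x + (Real.log (1-x))^2/2 = 0 := by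
  set g : ℝ → ℝ := fun x => LiR 2 (x/(x-1)) + LiR 2 x + (Real.log (1-x))^2/2 with hgdef
  have hderiv : ∀ x ∈ Ioo (0:ℝ) (1/2), HasDerivAt g 0 x := by
    intro x hx
    obtain ⟨hx0, hx2⟩ := hx
    have hx1 : x ≠ 1 := by intro h; rw [h] at hx2; norm_num at hx2
    have hxm1 : x - 1 ≠ 0 := sub_ne_zero.2 hx1
    have h1x : (1:ℝ) - x ≠ 0 := fun hh => hxm1 (by linarith [sub_eq_zero.1 hh])
    have hu := u_mem ⟨hx0, hx2⟩
    have huabs : |x/(x-1)| < 1 := abs_lt.2 ⟨hu.1, by linarith [hu.2]⟩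
    have hune : x/(x-1) ≠ 0 := ne_of_lt hu.2
    have hcomp := (hasDerivAt_LiR2 huabs hune).comp x (hasDerivAt_u hx1)
    have h2 := hasDerivAt_LiR2 (abs_lt.2 ⟨by linarith, by linarith⟩) (ne_of_gt hx0)
    have h3 : HasDerivAt (fun y : ℝ => (Real.log (1-y))^2/2)
        (2 * Real.log (1-x) ^ 1 * ((1-x)⁻¹ * (-1)) / 2) x :=
      (((hasDerivAt_log_one_sub hx1).pow 2)).div_const 2
    have h := (hcomp.add h2).add h3
    refine h.congr_deriv ?_
    rw [one_sub_u hx1, Real.log_inv]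
    field_simp
    ring
  have hconst := const_of_deriv_zero hderiv
  intro x hx
  have hcc : ∀ y ∈ Ioo (0:ℝ) (1/2), g y = g x := fun y hy => hconst y hy x hx
  have hlim : Tendsto g (𝓝[Ioo (0:ℝ) (1/2)] 0) (𝓝 0) := by
    have hsub : Ioo (0:ℝ) (1/2) ⊆ Icc (-1:ℝ) 1 :=
      fun y hy => ⟨by linarith [hy.1], by linarith [hy.2]⟩
    have t2 : Tendsto (LiR 2) (𝓝[Ioo (0:ℝ) (1/2)] 0) (𝓝 0) := by
      have h := (((contOn_LiR (le_refl 2)) 0 (by norm_num)).mono hsub).tendsto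
      rwa [LiR_zero] at h
    have t1 : Tendsto (fun y : ℝ => LiR 2 (y/(y-1))) (𝓝[Ioo (0:ℝ) (1/2)] 0) (𝓝 0) := by
      have hin : Tendsto (fun y : ℝ => y/(y-1)) (𝓝[Ioo (0:ℝ) (1/2)] 0) (𝓝[Icc (-1:ℝ) 1] 0) := by
        apply tendsto_nhdsWithin_of_tendsto_nhds_of_eventually_within
        · have hca : ContinuousAt (fun y : ℝ => y/(y-1)) 0 :=
            continuousAt_id.div (continuousAt_id.sub continuousAt_const) (by norm_num)
          have h0 : Tendsto (fun y : ℝ => y/(y-1)) (𝓝 0) (𝓝 0) := by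
            simpa using hca.tendsto
          exact h0.mono_left (nhdsWithin_le_nhds (s := Ioo (0:ℝ) (1/2)))
        · filter_upwards [self_mem_nhdsWithin] with y hy
          have := u_mem hy
          exact ⟨this.1.le, by linarith [this.2]⟩
      have hc := (contOn_LiR (le_refl 2)) 0 (by norm_num)
      have := hc.tendsto.comp hin
      rwa [LiR_zero] at this
    have t3 : Tendsto (fun y : ℝ => (Real.log (1-y))^2/2) (𝓝[Ioo (0:ℝ) (1/2)] 0) (𝓝 0) := by
      have hca : ContinuousAt (fun y : ℝ => (Real.log (1-y))^2/2) 0 := by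
        apply ContinuousAt.div_const
        apply ContinuousAt.pow
        exact (Real.continuousAt_log (by norm_num)).comp
          ((continuousAt_const.sub continuousAt_id))
      have h0 : Tendsto (fun y : ℝ => (Real.log (1-y))^2/2) (𝓝 0) (𝓝 0) := by
        simpa using hca.tendsto
      exact h0.mono_left (nhdsWithin_le_nhds (s := Ioo (0:ℝ) (1/2)))
    have := (t1.add t2).add t3
    simpa using this
  have := eval_at_left (by norm_num : (0:ℝ) < 1/2) hcc hlim
  show g x = 0
  rw [← this]

lemma landen3 : LiR 3 (1/2) + LiR 3 (1/2) + LiR 3 (-1) - (Real.log (1/2))^3/6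
      - π^2/6 * Real.log (1/2) + Real.log (1/2) * (Real.log (1/2))^2/2 = zeta3 := by
  set G : ℝ → ℝ := fun x => LiR 3 x + LiR 3 (1-x) + LiR 3 (x/(x-1)) - (Real.log (1-x))^3/6
      - π^2/6 * Real.log (1-x) + Real.log x * (Real.log (1-x))^2/2 with hGdef
  have hderiv : ∀ x ∈ Ioo (0:ℝ) (1/2), HasDerivAt G 0 x := by
    intro x hx
    obtain ⟨hx0, hx2⟩ := hx
    have hx1 : x ≠ 1 := by intro h; rw [h] at hx2; norm_num at hx2
    have hxm1 : x - 1 ≠ 0 := sub_ne_zero.2 hx1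
    have h1x : (1:ℝ) - x ≠ 0 := fun hh => hxm1 (by linarith [sub_eq_zero.1 hh])
    have hu := u_mem ⟨hx0, hx2⟩
    have huabs : |x/(x-1)| < 1 := abs_lt.2 ⟨hu.1, by linarith [hu.2]⟩
    have hune : x/(x-1) ≠ 0 := ne_of_lt hu.2
    have habs : |x| < 1 := abs_lt.2 ⟨by linarith, by linarith⟩
    have habs' : |1-x| < 1 := abs_lt.2 ⟨by linarith, by linarith⟩
    have hinner : HasDerivAt (fun y : ℝ => 1-y) (-1) x := by
      simpa using (hasDerivAt_id x).const_sub 1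
    have hA := hasDerivAt_LiR3 habs (ne_of_gt hx0)
    have hB := (hasDerivAt_LiR3 habs' h1x).comp x hinner
    have hC := (hasDerivAt_LiR3 huabs hune).comp x (hasDerivAt_u hx1)
    have hD := ((hasDerivAt_log_one_sub hx1).pow 3).div_const 6
    have hE := (hasDerivAt_log_one_sub hx1).const_mul (π^2/6)
    have hF := ((Real.hasDerivAt_log (ne_of_gt hx0)).mul
      ((hasDerivAt_log_one_sub hx1).pow 2)).div_const 2
    have h := ((((hA.add hB).add hC).sub hD).sub hE).add hF
    refine h.congr_deriv ?_
    have hrefl := li2_reflection x ⟨hx0, by linarith⟩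
    have hlan := landen2 x ⟨hx0, hx2⟩
    have hBval : LiR 2 (1-x) = π^2/6 - LiR 2 x - Real.log x * Real.log (1-x) := by linarith
    have hCval : LiR 2 (x/(x-1)) = -LiR 2 x - (Real.log (1-x))^2/2 := by linarith
    rw [hBval, hCval]
    simp only [Pi.pow_apply]
    field_simp
    ring
  have hconst := const_of_deriv_zero hderiv
  have hcc : ∀ y ∈ Ioo (0:ℝ) (1/2), G y = G (1/4) :=
    fun y hy => hconst y hy (1/4) (by norm_num)
  have hsub : Ioo (0:ℝ) (1/2) ⊆ Icc (-1:ℝ) 1 :=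
    fun y hy => ⟨by linarith [hy.1], by linarith [hy.2]⟩
  -- limit at 0 : G → zeta3
  have hlim0 : Tendsto G (𝓝[Ioo (0:ℝ) (1/2)] 0) (𝓝 zeta3) := by
    have t1 : Tendsto (LiR 3) (𝓝[Ioo (0:ℝ) (1/2)] 0) (𝓝 0) := by
      have h := (((contOn_LiR (by norm_num : 2 ≤ 3)) 0 (by norm_num)).mono hsub).tendsto
      rwa [LiR_zero] at h
    have t2 : Tendsto (fun y : ℝ => LiR 3 (1-y)) (𝓝[Ioo (0:ℝ) (1/2)] 0) (𝓝 zeta3) := by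
      have hin : Tendsto (fun y : ℝ => 1-y) (𝓝[Ioo (0:ℝ) (1/2)] 0) (𝓝[Icc (-1:ℝ) 1] 1) := by
        apply tendsto_nhdsWithin_of_tendsto_nhds_of_eventually_within
        · have hcont : Tendsto (fun y : ℝ => 1 - y) (𝓝 0) (𝓝 1) := by
            simpa using ((continuous_sub_left (1:ℝ)).tendsto (0:ℝ) :
              Tendsto (fun y : ℝ => 1 - y) _ _)
          exact hcont.mono_left nhdsWithin_le_nhds
        · filter_upwards [self_mem_nhdsWithin] with y hy
          exact ⟨by linarith [hy.2], by linarith [hy.1]⟩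
      have hc := (contOn_LiR (by norm_num : 2 ≤ 3)) 1 (by norm_num)
      have := hc.tendsto.comp hin
      rwa [LiR_three_one] at this
    have t3 : Tendsto (fun y : ℝ => LiR 3 (y/(y-1))) (𝓝[Ioo (0:ℝ) (1/2)] 0) (𝓝 0) := by
      have hin : Tendsto (fun y : ℝ => y/(y-1)) (𝓝[Ioo (0:ℝ) (1/2)] 0) (𝓝[Icc (-1:ℝ) 1] 0) := by
        apply tendsto_nhdsWithin_of_tendsto_nhds_of_eventually_within
        · have hca : ContinuousAt (fun y : ℝ => y/(y-1)) 0 :=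
            continuousAt_id.div (continuousAt_id.sub continuousAt_const) (by norm_num)
          have h0 : Tendsto (fun y : ℝ => y/(y-1)) (𝓝 0) (𝓝 0) := by
            simpa using hca.tendsto
          exact h0.mono_left (nhdsWithin_le_nhds (s := Ioo (0:ℝ) (1/2)))
        · filter_upwards [self_mem_nhdsWithin] with y hy
          have := u_mem hy
          exact ⟨this.1.le, by linarith [this.2]⟩
      have hc := (contOn_LiR (by norm_num : 2 ≤ 3)) 0 (by norm_num)
      have := hc.tendsto.comp hin
      rwa [LiR_zero] at this
    have t4 : Tendsto (fun y : ℝ => (Real.log (1-y))^3/6) (𝓝[Ioo (0:ℝ) (1/2)] 0) (𝓝 0) := by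
      have hca : ContinuousAt (fun y : ℝ => (Real.log (1-y))^3/6) 0 := by
        apply ContinuousAt.div_const
        apply ContinuousAt.pow
        exact (Real.continuousAt_log (by norm_num)).comp
          ((continuousAt_const.sub continuousAt_id))
      have h0 : Tendsto (fun y : ℝ => (Real.log (1-y))^3/6) (𝓝 0) (𝓝 0) := by
        simpa using hca.tendsto
      exact h0.mono_left (nhdsWithin_le_nhds (s := Ioo (0:ℝ) (1/2)))
    have t5 : Tendsto (fun y : ℝ => π^2/6 * Real.log (1-y)) (𝓝[Ioo (0:ℝ) (1/2)] 0) (𝓝 0) := by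
      have hca : ContinuousAt (fun y : ℝ => π^2/6 * Real.log (1-y)) 0 := by
        apply ContinuousAt.mul continuousAt_const
        exact (Real.continuousAt_log (by norm_num)).comp
          ((continuousAt_const.sub continuousAt_id))
      have h0 : Tendsto (fun y : ℝ => π^2/6 * Real.log (1-y)) (𝓝 0) (𝓝 0) := by
        simpa using hca.tendsto
      exact h0.mono_left (nhdsWithin_le_nhds (s := Ioo (0:ℝ) (1/2)))
    have t6 : Tendsto (fun y : ℝ => Real.log y * (Real.log (1-y))^2/2)
        (𝓝[Ioo (0:ℝ) (1/2)] 0) (𝓝 0) := by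
      have hxlx : Tendsto (fun y : ℝ => Real.log y * y) (𝓝[Ioo (0:ℝ) (1/2)] 0) (𝓝 0) := by
        have hA : Tendsto (fun t : ℝ => Real.log t * t) (𝓝[>] (0:ℝ)) (𝓝 0) := by
          simpa using tendsto_log_mul_rpow_nhdsGT_zero (one_pos)
        exact hA.mono_left (nhdsWithin_mono 0 (fun y hy => hy.1))
      have hslope0 : Tendsto (fun y : ℝ => Real.log (1-y)/y) (𝓝[Ioo (0:ℝ) (1/2)] 0) (𝓝 (-1)) := by
        have hd : HasDerivAt (fun y : ℝ => Real.log (1-y)) (-1) 0 := by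
          have := hasDerivAt_log_one_sub (x := 0) (by norm_num)
          simpa using this
        have hsl := hasDerivAt_iff_tendsto_slope.1 hd
        have hmono : 𝓝[Ioo (0:ℝ) (1/2)] (0:ℝ) ≤ 𝓝[≠] (0:ℝ) :=
          nhdsWithin_mono 0 (fun y hy => ne_of_gt hy.1)
        apply (hsl.mono_left hmono).congr'
        filter_upwards [self_mem_nhdsWithin] with y _
        rw [slope_def_field]
        norm_num
      have hid : Tendsto (fun y : ℝ => y) (𝓝[Ioo (0:ℝ) (1/2)] 0) (𝓝 0) :=
        tendsto_id.mono_left nhdsWithin_le_nhds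
      have hmul := ((((hxlx.mul hslope0).mul hslope0).mul hid).div_const 2)
      have h0 : Tendsto (fun y : ℝ => Real.log y * y * (Real.log (1-y)/y) * (Real.log (1-y)/y) * y / 2)
          (𝓝[Ioo (0:ℝ) (1/2)] 0) (𝓝 0) := by
        convert hmul using 2
        norm_num
      apply h0.congr'
      filter_upwards [self_mem_nhdsWithin] with y hy
      have hy0 : y ≠ 0 := ne_of_gt hy.1
      field_simp
    have := (((((t1.add t2).add t3).sub t4).sub t5).add t6)
    simpa using this
  -- limit at 1/2 : G → 2 * LiR 3 (1/2) + stuff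
  have hlim2 : Tendsto G (𝓝[Ioo (0:ℝ) (1/2)] (1/2))
      (𝓝 (LiR 3 (1/2) + LiR 3 (1/2) + LiR 3 (-1) - (Real.log (1/2))^3/6
        - π^2/6 * Real.log (1/2) + Real.log (1/2) * (Real.log (1/2))^2/2)) := by
    have t1 : Tendsto (LiR 3) (𝓝[Ioo (0:ℝ) (1/2)] (1/2)) (𝓝 (LiR 3 (1/2))) :=
      (((contOn_LiR (by norm_num : 2 ≤ 3)) (1/2) (by norm_num)).mono hsub).tendsto
    have t2 : Tendsto (fun y : ℝ => LiR 3 (1-y)) (𝓝[Ioo (0:ℝ) (1/2)] (1/2)) (𝓝 (LiR 3 (1/2))) := by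
      have hin : Tendsto (fun y : ℝ => 1-y) (𝓝[Ioo (0:ℝ) (1/2)] (1/2)) (𝓝[Icc (-1:ℝ) 1] (1/2)) := by
        apply tendsto_nhdsWithin_of_tendsto_nhds_of_eventually_within
        · have hcont : Tendsto (fun y : ℝ => 1 - y) (𝓝 (1/2)) (𝓝 (1/2)) := by
            have := ((continuous_const.sub continuous_id :
              Continuous (fun y : ℝ => 1 - y)).tendsto ((1:ℝ)/2))
            norm_num at this
            exact this
          exact hcont.mono_left nhdsWithin_le_nhds
        · filter_upwards [self_mem_nhdsWithin] with y hy
          exact ⟨by linarith [hy.2], by linarith [hy.1]⟩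
      exact (((contOn_LiR (by norm_num : 2 ≤ 3)) (1/2) (by norm_num)).tendsto).comp hin
    have t3 : Tendsto (fun y : ℝ => LiR 3 (y/(y-1))) (𝓝[Ioo (0:ℝ) (1/2)] (1/2)) (𝓝 (LiR 3 (-1))) := by
      have hin : Tendsto (fun y : ℝ => y/(y-1)) (𝓝[Ioo (0:ℝ) (1/2)] (1/2)) (𝓝[Icc (-1:ℝ) 1] (-1)) := by
        apply tendsto_nhdsWithin_of_tendsto_nhds_of_eventually_within
        · have hca : ContinuousAt (fun y : ℝ => y/(y-1)) (1/2) :=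
            continuousAt_id.div (continuousAt_id.sub continuousAt_const) (by norm_num)
          have h0 : Tendsto (fun y : ℝ => y/(y-1)) (𝓝 (1/2)) (𝓝 (-1)) := by
            have := hca.tendsto
            norm_num at this
            exact this
          exact h0.mono_left (nhdsWithin_le_nhds (s := Ioo (0:ℝ) (1/2)))
        · filter_upwards [self_mem_nhdsWithin] with y hy
          have := u_mem hy
          exact ⟨this.1.le, by linarith [this.2]⟩
      exact (((contOn_LiR (by norm_num : 2 ≤ 3)) (-1) (by norm_num)).tendsto).comp hin
    have hlogc : ContinuousAt (fun y : ℝ => Real.log (1-y)) (1/2) :=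
      (Real.continuousAt_log (by norm_num)).comp ((continuousAt_const.sub continuousAt_id))
    have hlogc' : ContinuousAt Real.log (1/2) := Real.continuousAt_log (by norm_num)
    have t4 : Tendsto (fun y : ℝ => (Real.log (1-y))^3/6) (𝓝[Ioo (0:ℝ) (1/2)] (1/2))
        (𝓝 ((Real.log (1/2))^3/6)) := by
      have h0 := ((hlogc.pow 3).div_const 6).tendsto
      have h1 : Tendsto (fun y : ℝ => (Real.log (1-y))^3/6) (𝓝 (1/2)) (𝓝 ((Real.log (1/2))^3/6)) := by
        norm_num at h0 ⊢
        exact h0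
      exact h1.mono_left (nhdsWithin_le_nhds (s := Ioo (0:ℝ) (1/2)))
    have t5 : Tendsto (fun y : ℝ => π^2/6 * Real.log (1-y)) (𝓝[Ioo (0:ℝ) (1/2)] (1/2))
        (𝓝 (π^2/6 * Real.log (1/2))) := by
      have hca5 : ContinuousAt (fun y : ℝ => π^2/6 * Real.log (1-y)) (1/2) :=
        continuousAt_const.mul hlogc
      have h0 := hca5.tendsto
      have h1 : Tendsto (fun y : ℝ => π^2/6 * Real.log (1-y)) (𝓝 (1/2)) (𝓝 (π^2/6 * Real.log (1/2))) := by
        norm_num at h0 ⊢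
        exact h0
      exact h1.mono_left (nhdsWithin_le_nhds (s := Ioo (0:ℝ) (1/2)))
    have t6 : Tendsto (fun y : ℝ => Real.log y * (Real.log (1-y))^2/2) (𝓝[Ioo (0:ℝ) (1/2)] (1/2))
        (𝓝 (Real.log (1/2) * (Real.log (1/2))^2/2)) := by
      have h0 := ((hlogc'.mul (hlogc.pow 2)).div_const 2).tendsto
      have h1 : Tendsto (fun y : ℝ => Real.log y * (Real.log (1-y))^2/2) (𝓝 (1/2))
          (𝓝 (Real.log (1/2) * (Real.log (1/2))^2/2)) := by
        norm_num at h0 ⊢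
        exact h0
      exact h1.mono_left (nhdsWithin_le_nhds (s := Ioo (0:ℝ) (1/2)))
    exact (((((t1.add t2).add t3).sub t4).sub t5).add t6)
  have hz := eval_at_left (by norm_num : (0:ℝ) < 1/2) hcc hlim0
  have hv := eval_at_right (by norm_num : (0:ℝ) < 1/2) hcc hlim2
  linarith [hz, hv]

theorem stmt13 : LiR 3 (1/2) = 7 * zeta3 / 8 - Real.pi ^ 2 * Real.log 2 / 12 + (Real.log 2) ^ 3 / 6 := by
  have h := landen3
  have hlog : Real.log (1/2) = -Real.log 2 := by
    rw [show (1/2 : ℝ) = 2⁻¹ by norm_num, Real.log_inv]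
  rw [hlog, LiR_three_neg_one] at h
  nlinarith [h]
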